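/- Suppose aₙ → a almost everywhere in Q (real-valued measurable functions) and vₙ ⇀ v weakly in L²(Q;ℝ²). Then the anisotropic energy is lower semi-continuous along this sequence: liminf_{n→∞} ∫_Q γ(R(aₙ(z)) vₙ(z)) dz ≥ ∫_Q γ(R(a(z)) v(z)) dz. -/

import Mathlib

open MeasureTheory Filter
open scoped RealInnerProductSpace

/-- The rotation of `ℝ²` through angle `θ`, with matrix `((cos θ, −sin θ), (sin θ, cos θ))`. -/
noncomputable def rot (θ : ℝ) (w : EuclideanSpace ℝ (Fin 2)) : EuclideanSpace ℝ (Fin 2) :=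
  (WithLp.equiv 2 (Fin 2 → ℝ)).symm
    ![Real.cos θ * w 0 - Real.sin θ * w 1, Real.sin θ * w 0 + Real.cos θ * w 1]

@[simp] lemma rot_apply0 (θ : ℝ) (w : EuclideanSpace ℝ (Fin 2)) :
    rot θ w 0 = Real.cos θ * w 0 - Real.sin θ * w 1 := by
  simp [rot]

@[simp] lemma rot_apply1 (θ : ℝ) (w : EuclideanSpace ℝ (Fin 2)) :
    rot θ w 1 = Real.sin θ * w 0 + Real.cos θ * w 1 := by
  simp [rot]

lemma inner_rot_rot (θ : ℝ) (u w : EuclideanSpace ℝ (Fin 2)) :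
    ⟪rot θ u, rot θ w⟫ = ⟪u, w⟫ := by
  simp only [PiLp.inner_apply, RCLike.inner_apply, conj_trivial, Fin.sum_univ_two,
    rot_apply0, rot_apply1]
  linear_combination (u 0 * w 0 + u 1 * w 1) * Real.sin_sq_add_cos_sq θ

lemma inner_rot_left (θ : ℝ) (u w : EuclideanSpace ℝ (Fin 2)) :
    ⟪rot θ u, w⟫ = ⟪u, rot (-θ) w⟫ := by
  simp only [PiLp.inner_apply, RCLike.inner_apply, conj_trivial, Fin.sum_univ_two,
    rot_apply0, rot_apply1, Real.cos_neg, Real.sin_neg]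
  ring

lemma norm_rot (θ : ℝ) (w : EuclideanSpace ℝ (Fin 2)) : ‖rot θ w‖ = ‖w‖ := by
  have h := inner_rot_rot θ w w
  rw [real_inner_self_eq_norm_sq, real_inner_self_eq_norm_sq] at h
  have := norm_nonneg (rot θ w); have := norm_nonneg w
  nlinarith

lemma norm_rot_sub_rot (θ φ : ℝ) (w : EuclideanSpace ℝ (Fin 2)) :
    ‖rot θ w - rot φ w‖ ≤ Real.sqrt 2 * (min |θ - φ| 2 * ‖w‖) := by
  set c := Real.cos θ - Real.cos φ with hc
  set s := Real.sin θ - Real.sin φ with hs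
  set m := min |θ - φ| 2 with hm
  have hm0 : 0 ≤ m := le_min (abs_nonneg _) (by norm_num)
  have key : c ^ 2 + s ^ 2 ≤ 2 * m ^ 2 := by
    have hcs : c ^ 2 + s ^ 2 = 2 - 2 * Real.cos (θ - φ) := by
      rw [Real.cos_sub]
      have h1 := Real.sin_sq_add_cos_sq θ
      have h2 := Real.sin_sq_add_cos_sq φ
      linear_combination h1 + h2
    have hb1 : 2 - 2 * Real.cos (θ - φ) ≤ (θ - φ) ^ 2 := by
      have := Real.one_sub_sq_div_two_le_cos (x := θ - φ)
      nlinarith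
    have hb2 : 2 - 2 * Real.cos (θ - φ) ≤ 4 := by
      have := Real.neg_one_le_cos (θ - φ); linarith
    rcases le_total |θ - φ| 2 with h | h
    · have : m = |θ - φ| := min_eq_left h
      rw [this, sq_abs]
      nlinarith
    · have : m = 2 := min_eq_right h
      rw [this]; nlinarith
  have hsq : ‖rot θ w - rot φ w‖ ^ 2 ≤ (Real.sqrt 2 * (m * ‖w‖)) ^ 2 := by
    have hinner : ⟪rot θ w - rot φ w, rot θ w - rot φ w⟫
        = (c ^ 2 + s ^ 2) * (w 0 ^ 2 + w 1 ^ 2) := by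
      simp only [PiLp.inner_apply, RCLike.inner_apply, conj_trivial, Fin.sum_univ_two,
        PiLp.sub_apply, rot_apply0, rot_apply1, hc, hs]
      ring
    have hw : ‖w‖ ^ 2 = w 0 ^ 2 + w 1 ^ 2 := by
      have := real_inner_self_eq_norm_sq w
      simp only [PiLp.inner_apply, RCLike.inner_apply, conj_trivial, Fin.sum_univ_two] at this
      nlinarith
    have h2 : (Real.sqrt 2) ^ 2 = 2 := Real.sq_sqrt (by norm_num)
    rw [← real_inner_self_eq_norm_sq, hinner]
    have hw2 : 0 ≤ w 0 ^ 2 + w 1 ^ 2 := by positivity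
    calc (c ^ 2 + s ^ 2) * (w 0 ^ 2 + w 1 ^ 2) ≤ 2 * m ^ 2 * (w 0 ^ 2 + w 1 ^ 2) := by
          apply mul_le_mul_of_nonneg_right key hw2
      _ = (Real.sqrt 2 * (m * ‖w‖)) ^ 2 := by
          rw [mul_pow, mul_pow, h2, hw]; ring
  have hrhs : 0 ≤ Real.sqrt 2 * (m * ‖w‖) := by positivity
  nlinarith [norm_nonneg (rot θ w - rot φ w), hsq]

lemma rot_continuous : Continuous (fun p : ℝ × EuclideanSpace ℝ (Fin 2) => rot p.1 p.2) := by
  unfold rot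
  refine (PiLp.continuous_toLp 2 (fun _ : Fin 2 => ℝ)).comp ?_
  refine continuous_pi fun i => ?_
  have h0 : Continuous fun p : ℝ × EuclideanSpace ℝ (Fin 2) => p.2 0 :=
    ((continuous_apply (0 : Fin 2)).comp (PiLp.continuous_ofLp 2 (fun _ : Fin 2 => ℝ))).comp
      continuous_snd
  have h1 : Continuous fun p : ℝ × EuclideanSpace ℝ (Fin 2) => p.2 1 :=
    ((continuous_apply (1 : Fin 2)).comp (PiLp.continuous_ofLp 2 (fun _ : Fin 2 => ℝ))).comp
      continuous_snd
  fin_cases i <;> simp <;> fun_prop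

lemma gradient_ineq {γ : EuclideanSpace ℝ (Fin 2) → ℝ} {γ' : EuclideanSpace ℝ (Fin 2) → EuclideanSpace ℝ (Fin 2)}
    (hconv : ConvexOn ℝ Set.univ γ) (hgrad : ∀ x, HasGradientAt γ (γ' x) x)
    (x y : EuclideanSpace ℝ (Fin 2)) : γ x + ⟪γ' x, y - x⟫ ≤ γ y := by
  set c : ℝ → EuclideanSpace ℝ (Fin 2) := fun t => x + t • (y - x) with hcdef
  have hφconv : ConvexOn ℝ Set.univ (γ ∘ (AffineMap.lineMap x y : ℝ →ᵃ[ℝ] _)) := by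
    have := hconv.comp_affineMap (AffineMap.lineMap x y : ℝ →ᵃ[ℝ] _)
    simpa using this
  have hceq : ∀ t, (AffineMap.lineMap x y : ℝ →ᵃ[ℝ] _) t = c t := by
    intro t; simp [AffineMap.lineMap_apply, hcdef]; abel
  have hcderiv : HasDerivAt c (y - x) 0 := by
    have : HasDerivAt (fun t : ℝ => t • (y - x)) ((1 : ℝ) • (y - x)) 0 :=
      (hasDerivAt_id 0).smul_const (y - x)
    have h2 := this.const_add x
    simp only [one_smul] at h2
    exact h2
  have hc0 : c 0 = x := by simp [hcdef]
  have hφd : HasDerivAt (fun t => γ (c t)) ⟪γ' x, y - x⟫ 0 := by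
    have hg : HasFDerivAt γ (InnerProductSpace.toDual ℝ _ (γ' x)) (c 0) := by
      rw [hc0]; exact (hgrad x).hasFDerivAt
    have := hg.comp_hasDerivAt 0 hcderiv
    simp only [InnerProductSpace.toDual_apply_apply] at this
    exact this
  have hslope := hφconv.le_slope_of_hasDerivAt (Set.mem_univ 0) (Set.mem_univ 1)
    zero_lt_one (f' := ⟪γ' x, y - x⟫) ?_
  · have : slope (γ ∘ (AffineMap.lineMap x y : ℝ →ᵃ[ℝ] _)) 0 1 = γ y - γ x := by
      rw [slope_def_field]
      simp only [Function.comp_apply, hceq, hcdef]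
      rw [show x + (1:ℝ) • (y - x) = y by rw [one_smul]; abel,
        show x + (0:ℝ) • (y - x) = x by simp]
      norm_num
    rw [this] at hslope; linarith
  · have : (γ ∘ (AffineMap.lineMap x y : ℝ →ᵃ[ℝ] _)) = fun t => γ (c t) := by
      funext t; simp [Function.comp_apply, hceq]
    rw [this]; exact hφd

lemma L2_norm_toLp {α E : Type*} [MeasurableSpace α] {μ : MeasureTheory.Measure α}
    [NormedAddCommGroup E] [InnerProductSpace ℝ E] (f : α → E) (hf : MeasureTheory.MemLp f 2 μ) :
    ‖(hf.toLp f : MeasureTheory.Lp E 2 μ)‖ = Real.sqrt (∫ z, ‖f z‖ ^ 2 ∂μ) := by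
  have h1 : (‖hf.toLp f‖ : ℝ) ^ 2 = ⟪hf.toLp f, hf.toLp f⟫ :=
    (real_inner_self_eq_norm_sq _).symm
  have h2 : (⟪hf.toLp f, hf.toLp f⟫ : ℝ) = ∫ z, ⟪f z, f z⟫ ∂μ := by
    rw [MeasureTheory.L2.inner_def]
    refine MeasureTheory.integral_congr_ae ?_
    filter_upwards [hf.coeFn_toLp] with z hz
    rw [hz]
  have h3 : (∫ z, (⟪f z, f z⟫ : ℝ) ∂μ) = ∫ z, ‖f z‖ ^ 2 ∂μ := by
    refine MeasureTheory.integral_congr_ae (Filter.Eventually.of_forall fun z => ?_)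
    exact real_inner_self_eq_norm_sq _
  rw [← Real.sqrt_sq (norm_nonneg (hf.toLp f)), h1, h2, h3]

lemma L2_CS {α : Type*} [MeasurableSpace α] {μ : MeasureTheory.Measure α}
    (f g : α → ℝ) (hf : MeasureTheory.MemLp f 2 μ) (hg : MeasureTheory.MemLp g 2 μ) :
    ∫ z, f z * g z ∂μ ≤ ‖hf.toLp f‖ * ‖hg.toLp g‖ := by
  have h := real_inner_le_norm (hf.toLp f) (hg.toLp g)
  rw [MeasureTheory.L2.inner_def] at h
  refine le_trans (le_of_eq ?_) h
  refine (MeasureTheory.integral_congr_ae ?_).symm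
  filter_upwards [hf.coeFn_toLp, hg.coeFn_toLp] with z h1 h2
  rw [h1, h2]
  simp [RCLike.inner_apply, mul_comm]

set_option maxHeartbeats 1000000 in
/-- If `aₙ → a` a.e. in `Q` and `vₙ ⇀ v` weakly in `L²(Q;ℝ²)`, then the anisotropic energy
is lower semi-continuous along the sequence:
`liminf_n ∫_Q γ(R(aₙ) vₙ) ≥ ∫_Q γ(R(a) v)`. -/
theorem stmt15 (γ : EuclideanSpace ℝ (Fin 2) → ℝ)
    (γ' : EuclideanSpace ℝ (Fin 2) → EuclideanSpace ℝ (Fin 2)) (L₀ L₂ : ℝ)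
    (hnonneg : ∀ x, 0 ≤ γ x)
    (hconv : ConvexOn ℝ Set.univ γ)
    (hgrad : ∀ x, HasGradientAt γ (γ' x) x)
    (hbdd : ∀ x, ‖γ' x‖ ≤ L₀)
    (hlip : ∀ x y, ‖γ' x - γ' y‖ ≤ L₂ * ‖x - y‖)
    (hmin : ∀ x, x ≠ 0 → γ 0 < γ x)
    {Q : Type*} [MeasurableSpace Q] (μ : Measure Q) [IsFiniteMeasure μ]
    (aN : ℕ → Q → ℝ) (a : Q → ℝ)
    (haNmeas : ∀ n, Measurable (aN n)) (hameas : Measurable a)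
    (hae : ∀ᵐ z ∂μ, Tendsto (fun n => aN n z) atTop (nhds (a z)))
    (vN : ℕ → Q → EuclideanSpace ℝ (Fin 2)) (v : Q → EuclideanSpace ℝ (Fin 2))
    (hvN : ∀ n, MemLp (vN n) 2 μ) (hv : MemLp v 2 μ)
    (hweak : ∀ g : Q → EuclideanSpace ℝ (Fin 2), MemLp g 2 μ →
      Tendsto (fun n => ∫ z, ⟪vN n z, g z⟫ ∂μ) atTop (nhds (∫ z, ⟪v z, g z⟫ ∂μ))) :
    ∫ z, γ (rot (a z) (v z)) ∂μ
      ≤ liminf (fun n => ∫ z, γ (rot (aN n z) (vN n z)) ∂μ) atTop := by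
  classical
  have hL₀ : 0 ≤ L₀ := le_trans (norm_nonneg _) (hbdd 0)
  have hγcont : Continuous γ :=
    continuous_iff_continuousAt.2 fun x => (hgrad x).hasFDerivAt.continuousAt
  have hγ'cont : Continuous γ' := by
    have : LipschitzWith (Real.toNNReal L₂) γ' := by
      apply LipschitzWith.of_dist_le_mul
      intro x y
      rw [dist_eq_norm, dist_eq_norm]
      refine le_trans (hlip x y) ?_
      exact mul_le_mul_of_nonneg_right (Real.le_coe_toNNReal L₂) (norm_nonneg _)
    exact this.continuous
  have hγub : ∀ x, γ x ≤ γ 0 + L₀ * ‖x‖ := by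
    intro x
    have h := gradient_ineq hconv hgrad x 0
    have habs : |⟪γ' x, (0 : EuclideanSpace ℝ (Fin 2)) - x⟫| ≤ L₀ * ‖x‖ := by
      refine le_trans (abs_real_inner_le_norm _ _) ?_
      rw [zero_sub, norm_neg]
      exact mul_le_mul_of_nonneg_right (hbdd x) (norm_nonneg x)
    have := neg_abs_le (⟪γ' x, (0 : EuclideanSpace ℝ (Fin 2)) - x⟫ : ℝ)
    linarith
  -- measurability
  have haesm_v : AEStronglyMeasurable v μ := hv.aestronglyMeasurable
  have haesm_vN : ∀ n, AEStronglyMeasurable (vN n) μ := fun n => (hvN n).aestronglyMeasurable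
  have hb_meas : AEStronglyMeasurable (fun z => rot (a z) (v z)) μ :=
    rot_continuous.comp_aestronglyMeasurable (f := fun z => (a z, v z))
      (hameas.aestronglyMeasurable.prodMk haesm_v)
  have hpN_meas : ∀ n, AEStronglyMeasurable (fun z => rot (aN n z) (vN n z)) μ := fun n =>
    rot_continuous.comp_aestronglyMeasurable (f := fun z => (aN n z, vN n z))
      ((haNmeas n).aestronglyMeasurable.prodMk (haesm_vN n))
  have hrotavN_meas : ∀ n, AEStronglyMeasurable (fun z => rot (a z) (vN n z)) μ := fun n =>
    rot_continuous.comp_aestronglyMeasurable (f := fun z => (a z, vN n z))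
      (hameas.aestronglyMeasurable.prodMk (haesm_vN n))
  have hg_meas : AEStronglyMeasurable (fun z => γ' (rot (a z) (v z))) μ :=
    hγ'cont.comp_aestronglyMeasurable (f := fun z => rot (a z) (v z)) hb_meas
  have hh_meas : AEStronglyMeasurable (fun z => rot (-(a z)) (γ' (rot (a z) (v z)))) μ :=
    rot_continuous.comp_aestronglyMeasurable
      (f := fun z => (-(a z), γ' (rot (a z) (v z))))
      (hameas.neg.aestronglyMeasurable.prodMk hg_meas)
  have hh_mem : MemLp (fun z => rot (-(a z)) (γ' (rot (a z) (v z)))) 2 μ := by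
    refine MemLp.of_bound hh_meas L₀ (Filter.Eventually.of_forall fun z => ?_)
    rw [norm_rot]; exact hbdd _
  -- integrability
  have hvint : Integrable v μ := hv.integrable one_le_two
  have hvNint : ∀ n, Integrable (vN n) μ := fun n => (hvN n).integrable one_le_two
  have hγb_int : Integrable (fun z => γ (rot (a z) (v z))) μ := by
    refine Integrable.mono' ((integrable_const (γ 0)).add (hvint.norm.const_mul L₀))
      (hγcont.comp_aestronglyMeasurable (f := fun z => rot (a z) (v z)) hb_meas) (Filter.Eventually.of_forall fun z => ?_)
    rw [Real.norm_eq_abs, abs_of_nonneg (hnonneg _)]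
    refine le_trans (hγub _) ?_
    rw [norm_rot]; simp
  have hγpN_int : ∀ n, Integrable (fun z => γ (rot (aN n z) (vN n z))) μ := by
    intro n
    refine Integrable.mono' ((integrable_const (γ 0)).add ((hvNint n).norm.const_mul L₀))
      (hγcont.comp_aestronglyMeasurable (f := fun z => rot (aN n z) (vN n z)) (hpN_meas n)) (Filter.Eventually.of_forall fun z => ?_)
    rw [Real.norm_eq_abs, abs_of_nonneg (hnonneg _)]
    refine le_trans (hγub _) ?_
    rw [norm_rot]; simp
  have hIint : ∀ n, Integrable (fun z =>
      (⟪γ' (rot (a z) (v z)), rot (aN n z) (vN n z) - rot (a z) (v z)⟫ : ℝ)) μ := by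
    intro n
    refine Integrable.mono' (((hvNint n).norm.add hvint.norm).const_mul L₀)
      (hg_meas.inner ((hpN_meas n).sub hb_meas)) (Filter.Eventually.of_forall fun z => ?_)
    rw [Real.norm_eq_abs]
    refine le_trans (abs_real_inner_le_norm _ _) ?_
    have h1 : ‖rot (aN n z) (vN n z) - rot (a z) (v z)‖ ≤ ‖vN n z‖ + ‖v z‖ := by
      refine le_trans (norm_sub_le _ _) ?_
      rw [norm_rot, norm_rot]
    exact mul_le_mul (hbdd _) h1 (norm_nonneg _) hL₀
  have ht1int : ∀ n, Integrable (fun z =>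
      (⟪γ' (rot (a z) (v z)), rot (aN n z) (vN n z) - rot (a z) (vN n z)⟫ : ℝ)) μ := by
    intro n
    refine Integrable.mono' ((hvNint n).norm.const_mul (L₀ * 2))
      (hg_meas.inner ((hpN_meas n).sub (hrotavN_meas n))) (Filter.Eventually.of_forall fun z => ?_)
    rw [Real.norm_eq_abs]
    refine le_trans (abs_real_inner_le_norm _ _) ?_
    have h1 : ‖rot (aN n z) (vN n z) - rot (a z) (vN n z)‖ ≤ 2 * ‖vN n z‖ := by
      refine le_trans (norm_sub_le _ _) ?_
      rw [norm_rot, norm_rot]; linarith [norm_nonneg (vN n z)]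
    calc ‖γ' (rot (a z) (v z))‖ * ‖rot (aN n z) (vN n z) - rot (a z) (vN n z)‖
        ≤ L₀ * (2 * ‖vN n z‖) := mul_le_mul (hbdd _) h1 (norm_nonneg _) hL₀
      _ = L₀ * 2 * ‖vN n z‖ := by ring
  have ht2int : ∀ n, Integrable (fun z =>
      (⟪vN n z, rot (-(a z)) (γ' (rot (a z) (v z)))⟫ : ℝ)) μ := by
    intro n
    refine Integrable.mono' ((hvNint n).norm.const_mul L₀)
      ((haesm_vN n).inner hh_meas) (Filter.Eventually.of_forall fun z => ?_)
    rw [Real.norm_eq_abs]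
    refine le_trans (abs_real_inner_le_norm _ _) ?_
    rw [norm_rot]
    rw [mul_comm]
    exact mul_le_mul_of_nonneg_right (hbdd _) (norm_nonneg _)
  have ht3int : Integrable (fun z =>
      (⟪v z, rot (-(a z)) (γ' (rot (a z) (v z)))⟫ : ℝ)) μ := by
    refine Integrable.mono' (hvint.norm.const_mul L₀)
      (haesm_v.inner hh_meas) (Filter.Eventually.of_forall fun z => ?_)
    rw [Real.norm_eq_abs]
    refine le_trans (abs_real_inner_le_norm _ _) ?_
    rw [norm_rot, mul_comm]
    exact mul_le_mul_of_nonneg_right (hbdd _) (norm_nonneg _)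
  -- main pointwise inequality, integrated
  have hmain : ∀ n, (∫ z, γ (rot (a z) (v z)) ∂μ)
      + ∫ z, (⟪γ' (rot (a z) (v z)), rot (aN n z) (vN n z) - rot (a z) (v z)⟫ : ℝ) ∂μ
      ≤ ∫ z, γ (rot (aN n z) (vN n z)) ∂μ := by
    intro n
    rw [← integral_add hγb_int (hIint n)]
    exact integral_mono (hγb_int.add (hIint n)) (hγpN_int n)
      (fun z => gradient_ineq hconv hgrad _ _)
  -- Banach–Steinhaus: weak convergence implies L² boundedness
  obtain ⟨C, hC⟩ : ∃ C, ∀ n,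
      ‖((hvN n).toLp (vN n) : Lp (EuclideanSpace ℝ (Fin 2)) 2 μ)‖ ≤ C := by
    have hpt : ∀ G : Lp (EuclideanSpace ℝ (Fin 2)) 2 μ,
        ∃ M, ∀ n, ‖(innerSL ℝ ((hvN n).toLp (vN n))) G‖ ≤ M := by
      intro G
      have heq : ∀ n, (innerSL ℝ ((hvN n).toLp (vN n))) G = ∫ z, ⟪vN n z, G z⟫ ∂μ := by
        intro n
        rw [innerSL_apply_apply, L2.inner_def]
        refine integral_congr_ae ?_
        filter_upwards [(hvN n).coeFn_toLp] with z hz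
        rw [hz]
      have htend : Tendsto (fun n => (innerSL ℝ ((hvN n).toLp (vN n))) G) atTop
          (nhds (∫ z, ⟪v z, G z⟫ ∂μ)) := by
        simp only [heq]
        exact hweak _ (Lp.memLp G)
      obtain ⟨M, hM⟩ := htend.norm.bddAbove_range
      exact ⟨M, fun n => hM (Set.mem_range_self n)⟩
    obtain ⟨C, hC⟩ := banach_steinhaus hpt
    exact ⟨C, fun n => by have := hC n; rwa [innerSL_apply_norm] at this⟩
  have hC0 : 0 ≤ C := le_trans (norm_nonneg _) (hC 0)
  have hΨC : ∀ n, ‖((hvN n).norm.toLp _ : Lp ℝ 2 μ)‖ ≤ C := by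
    intro n
    rw [L2_norm_toLp]
    have h' : ‖((hvN n).toLp (vN n) : Lp (EuclideanSpace ℝ (Fin 2)) 2 μ)‖
        = Real.sqrt (∫ z, ‖vN n z‖ ^ 2 ∂μ) := L2_norm_toLp _ _
    have heq : (∫ z, ‖‖vN n z‖‖ ^ 2 ∂μ) = ∫ z, ‖vN n z‖ ^ 2 ∂μ :=
      integral_congr_ae (Filter.Eventually.of_forall fun z => by simp)
    rw [heq, ← h']
    exact hC n
  -- the scalar functions min |aN n - a| 2
  have hφm : ∀ n, Measurable (fun z => min |aN n z - a z| 2) := fun n =>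
    (((haNmeas n).sub hameas).abs).min measurable_const
  have hφ0 : ∀ n z, 0 ≤ min |aN n z - a z| 2 := fun n z =>
    le_min (abs_nonneg _) (by norm_num)
  have hφmem : ∀ n, MemLp (fun z => min |aN n z - a z| 2) 2 μ := fun n =>
    MemLp.of_bound (hφm n).aestronglyMeasurable 2 (Filter.Eventually.of_forall fun z => by
      rw [Real.norm_eq_abs, abs_of_nonneg (hφ0 n z)]
      exact min_le_right _ _)
  have hDCT : Tendsto (fun n => ∫ z, (min |aN n z - a z| 2) ^ 2 ∂μ) atTop (nhds 0) := by
    have h0 : (0 : ℝ) = ∫ (_ : Q), (0 : ℝ) ∂μ := by simp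
    rw [h0]
    refine tendsto_integral_of_dominated_convergence (fun _ => (4 : ℝ))
      (fun n => ((hφm n).pow_const 2).aestronglyMeasurable)
      (integrable_const 4) (fun n => Filter.Eventually.of_forall fun z => ?_) ?_
    · show ‖(min |aN n z - a z| 2) ^ 2‖ ≤ (4 : ℝ)
      rw [Real.norm_eq_abs, abs_of_nonneg (pow_nonneg (hφ0 n z) 2)]
      have h1 := hφ0 n z
      have h2 : min |aN n z - a z| 2 ≤ 2 := min_le_right _ _
      nlinarith
    · filter_upwards [hae] with z hz
      have h1 : Tendsto (fun n => |aN n z - a z|) atTop (nhds 0) := by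
        have := (hz.sub (tendsto_const_nhds (x := a z))).abs
        simpa using this
      have h2 : Tendsto (fun n => min |aN n z - a z| 2) atTop (nhds 0) := by
        have := h1.min (tendsto_const_nhds (x := (2 : ℝ)))
        simpa using this
      have := h2.pow 2
      simpa using this
  -- the error term tends to zero
  have hE0 : Tendsto (fun n => ∫ z,
      (⟪γ' (rot (a z) (v z)), rot (aN n z) (vN n z) - rot (a z) (vN n z)⟫ : ℝ) ∂μ)
      atTop (nhds 0) := by
    refine squeeze_zero_norm (a := fun n =>
      Real.sqrt 2 * L₀ * C * Real.sqrt (∫ z, (min |aN n z - a z| 2) ^ 2 ∂μ)) (fun n => ?_) ?_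
    · have hprod_int : Integrable (fun z => min |aN n z - a z| 2 * ‖vN n z‖) μ := by
        refine Integrable.mono' ((hvNint n).norm.const_mul 2)
          ((hφm n).aestronglyMeasurable.mul (haesm_vN n).norm)
          (Filter.Eventually.of_forall fun z => ?_)
        rw [Real.norm_eq_abs, abs_mul, abs_of_nonneg (hφ0 n z), abs_of_nonneg (norm_nonneg _)]
        exact mul_le_mul_of_nonneg_right (min_le_right _ _) (norm_nonneg _)
      have step1 : ‖∫ z,
          (⟪γ' (rot (a z) (v z)), rot (aN n z) (vN n z) - rot (a z) (vN n z)⟫ : ℝ) ∂μ‖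
          ≤ ∫ z, Real.sqrt 2 * L₀ * (min |aN n z - a z| 2 * ‖vN n z‖) ∂μ := by
        refine le_trans (norm_integral_le_integral_norm _) ?_
        refine integral_mono (ht1int n).norm (hprod_int.const_mul _) (fun z => ?_)
        rw [Real.norm_eq_abs]
        refine le_trans (abs_real_inner_le_norm _ _) ?_
        have h2 := norm_rot_sub_rot (aN n z) (a z) (vN n z)
        calc ‖γ' (rot (a z) (v z))‖ * ‖rot (aN n z) (vN n z) - rot (a z) (vN n z)‖
            ≤ L₀ * (Real.sqrt 2 * (min |aN n z - a z| 2 * ‖vN n z‖)) :=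
              mul_le_mul (hbdd _) h2 (norm_nonneg _) hL₀
          _ = Real.sqrt 2 * L₀ * (min |aN n z - a z| 2 * ‖vN n z‖) := by ring
      have step2 : ∫ z, Real.sqrt 2 * L₀ * (min |aN n z - a z| 2 * ‖vN n z‖) ∂μ
          = Real.sqrt 2 * L₀ * ∫ z, min |aN n z - a z| 2 * ‖vN n z‖ ∂μ :=
        integral_const_mul _ _
      have hCS := L2_CS (fun z => min |aN n z - a z| 2) (fun z => ‖vN n z‖)
        (hφmem n) (hvN n).norm
      have hΦ : ‖(hφmem n).toLp _‖ = Real.sqrt (∫ z, (min |aN n z - a z| 2) ^ 2 ∂μ) := by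
        rw [L2_norm_toLp]
        congr 1
        refine integral_congr_ae (Filter.Eventually.of_forall fun z => ?_)
        simp [Real.norm_eq_abs, sq_abs]
      have hΨ := hΨC n
      have hΦ0 : (0:ℝ) ≤ ‖(hφmem n).toLp _‖ := norm_nonneg _
      calc ‖∫ z, (⟪γ' (rot (a z) (v z)),
              rot (aN n z) (vN n z) - rot (a z) (vN n z)⟫ : ℝ) ∂μ‖
          ≤ ∫ z, Real.sqrt 2 * L₀ * (min |aN n z - a z| 2 * ‖vN n z‖) ∂μ := step1
        _ = Real.sqrt 2 * L₀ * ∫ z, min |aN n z - a z| 2 * ‖vN n z‖ ∂μ := step2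
        _ ≤ Real.sqrt 2 * L₀ * (‖(hφmem n).toLp _‖ * ‖((hvN n).norm.toLp _ : Lp ℝ 2 μ)‖) := by
              refine mul_le_mul_of_nonneg_left hCS (by positivity)
        _ ≤ Real.sqrt 2 * L₀ * (‖(hφmem n).toLp _‖ * C) := by
              refine mul_le_mul_of_nonneg_left (mul_le_mul_of_nonneg_left hΨ hΦ0) (by positivity)
        _ = Real.sqrt 2 * L₀ * C * Real.sqrt (∫ z, (min |aN n z - a z| 2) ^ 2 ∂μ) := by
              rw [hΦ]; ring
    · have hsq : Tendsto (fun n => Real.sqrt (∫ z, (min |aN n z - a z| 2) ^ 2 ∂μ)) atTop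
          (nhds 0) := by
        have := (Real.continuous_sqrt.tendsto' 0 0 Real.sqrt_zero).comp hDCT
        exact this
      have := hsq.const_mul (Real.sqrt 2 * L₀ * C)
      simpa using this
  -- splitting of the linear term, and its limit
  have hsplit : ∀ n z, (⟪γ' (rot (a z) (v z)), rot (aN n z) (vN n z) - rot (a z) (v z)⟫ : ℝ)
      = ⟪γ' (rot (a z) (v z)), rot (aN n z) (vN n z) - rot (a z) (vN n z)⟫
        + ⟪vN n z, rot (-(a z)) (γ' (rot (a z) (v z)))⟫
        - ⟪v z, rot (-(a z)) (γ' (rot (a z) (v z)))⟫ := by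
    intro n z
    have e1 : ∀ u : EuclideanSpace ℝ (Fin 2), (⟪γ' (rot (a z) (v z)), rot (a z) u⟫ : ℝ)
        = ⟪u, rot (-(a z)) (γ' (rot (a z) (v z)))⟫ := fun u => by
      rw [real_inner_comm, inner_rot_left]
    simp only [inner_sub_right]
    rw [← e1 (vN n z), ← e1 (v z)]
    ring
  have hIeq : ∀ n, (∫ z, (⟪γ' (rot (a z) (v z)),
        rot (aN n z) (vN n z) - rot (a z) (v z)⟫ : ℝ) ∂μ)
      = (∫ z, (⟪γ' (rot (a z) (v z)), rot (aN n z) (vN n z) - rot (a z) (vN n z)⟫ : ℝ) ∂μ)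
        + (∫ z, (⟪vN n z, rot (-(a z)) (γ' (rot (a z) (v z)))⟫ : ℝ) ∂μ)
        - ∫ z, (⟪v z, rot (-(a z)) (γ' (rot (a z) (v z)))⟫ : ℝ) ∂μ := by
    intro n
    have h12 : Integrable (fun z =>
        (⟪γ' (rot (a z) (v z)), rot (aN n z) (vN n z) - rot (a z) (vN n z)⟫ : ℝ)
        + ⟪vN n z, rot (-(a z)) (γ' (rot (a z) (v z)))⟫) μ := (ht1int n).add (ht2int n)
    have e : (∫ z, (⟪γ' (rot (a z) (v z)),
          rot (aN n z) (vN n z) - rot (a z) (v z)⟫ : ℝ) ∂μ)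
        = ∫ z, ((⟪γ' (rot (a z) (v z)), rot (aN n z) (vN n z) - rot (a z) (vN n z)⟫ : ℝ)
            + ⟪vN n z, rot (-(a z)) (γ' (rot (a z) (v z)))⟫
            - ⟪v z, rot (-(a z)) (γ' (rot (a z) (v z)))⟫) ∂μ :=
      integral_congr_ae (Filter.Eventually.of_forall fun z => hsplit n z)
    rw [e, integral_sub h12 ht3int, integral_add (ht1int n) (ht2int n)]
  have hW : Tendsto (fun n => ∫ z, (⟪vN n z, rot (-(a z)) (γ' (rot (a z) (v z)))⟫ : ℝ) ∂μ)
      atTop (nhds (∫ z, (⟪v z, rot (-(a z)) (γ' (rot (a z) (v z)))⟫ : ℝ) ∂μ)) :=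
    hweak _ hh_mem
  have hIlim : Tendsto (fun n => ∫ z, (⟪γ' (rot (a z) (v z)),
      rot (aN n z) (vN n z) - rot (a z) (v z)⟫ : ℝ) ∂μ) atTop (nhds 0) := by
    have heq : (fun n => ∫ z, (⟪γ' (rot (a z) (v z)),
        rot (aN n z) (vN n z) - rot (a z) (v z)⟫ : ℝ) ∂μ)
        = fun n => (∫ z, (⟪γ' (rot (a z) (v z)),
            rot (aN n z) (vN n z) - rot (a z) (vN n z)⟫ : ℝ) ∂μ)
          + (∫ z, (⟪vN n z, rot (-(a z)) (γ' (rot (a z) (v z)))⟫ : ℝ) ∂μ)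
          - ∫ z, (⟪v z, rot (-(a z)) (γ' (rot (a z) (v z)))⟫ : ℝ) ∂μ := funext hIeq
    rw [heq]
    have := (hE0.add hW).sub_const
      (∫ z, (⟪v z, rot (-(a z)) (γ' (rot (a z) (v z)))⟫ : ℝ) ∂μ)
    simpa using this
  -- conclusion via liminf
  have hflim : Tendsto (fun n => (∫ z, γ (rot (a z) (v z)) ∂μ)
      + ∫ z, (⟪γ' (rot (a z) (v z)), rot (aN n z) (vN n z) - rot (a z) (v z)⟫ : ℝ) ∂μ)
      atTop (nhds (∫ z, γ (rot (a z) (v z)) ∂μ)) := by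
    have := tendsto_const_nhds (x := ∫ z, γ (rot (a z) (v z)) ∂μ) (f := atTop (α := ℕ)) |>.add hIlim
    simpa using this
  rw [← hflim.liminf_eq]
  refine liminf_le_liminf (Filter.Eventually.of_forall hmain) ?_ ?_
  · exact hflim.isBoundedUnder_ge
  · refine Filter.IsCoboundedUnder.of_frequently_le
      (a := γ 0 * (μ Set.univ).toReal
        + L₀ * (‖(MemLp.toLp (fun _ => (1:ℝ)) (memLp_const 1) : Lp ℝ 2 μ)‖ * C)) ?_
    refine Filter.Eventually.frequently (Filter.Eventually.of_forall fun n => ?_)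
    have step1 : ∫ z, γ (rot (aN n z) (vN n z)) ∂μ ≤ ∫ z, (γ 0 + L₀ * ‖vN n z‖) ∂μ := by
      refine integral_mono (hγpN_int n)
        ((integrable_const _).add ((hvNint n).norm.const_mul L₀)) (fun z => ?_)
      have := hγub (rot (aN n z) (vN n z))
      rwa [norm_rot] at this
    have step2 : (∫ z, (γ 0 + L₀ * ‖vN n z‖) ∂μ)
        = γ 0 * (μ Set.univ).toReal + L₀ * ∫ z, ‖vN n z‖ ∂μ := by
      rw [integral_add (integrable_const _) ((hvNint n).norm.const_mul L₀),
        integral_const, integral_const_mul]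
      simp [smul_eq_mul, mul_comm, measureReal_def]
    have step3 : (∫ z, ‖vN n z‖ ∂μ)
        ≤ ‖(MemLp.toLp (fun _ => (1:ℝ)) (memLp_const 1) : Lp ℝ 2 μ)‖ * C := by
      have hcs := L2_CS (fun _ => (1:ℝ)) (fun z => ‖vN n z‖) (memLp_const 1) (hvN n).norm
      simp only [one_mul] at hcs
      exact hcs.trans (mul_le_mul_of_nonneg_left (hΨC n) (norm_nonneg _))
    have := mul_le_mul_of_nonneg_left step3 hL₀
    linarith
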